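/- arXiv:2208.14351 — 2 statements merged into one kernel-verified Lean document; each statement's English description precedes it below -/
import Mathlib

section
/- Let λ ≤ ν and μ ≤ ν be set partitions of [n]. Then the Young subgroup S_ν decomposes as a disjoint union of (S_μ, S_λ)-double cosets S_ν = ⨆_z S_μ z S_λ, and for each double coset representative z, S_μ ∩ z S_λ z^{-1} = S_{μ ∧ zλ}. -/
/-- The Young subgroup of `S_n` associated to a set partition of `Fin n`. -/
def youngSubgroup {n : ℕ} (σ : Setoid (Fin n)) : Subgroup (Equiv.Perm (Fin n)) where
  carrier := {w | ∀ i, σ.r (w i) i}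
  one_mem' := fun _ => σ.refl _
  mul_mem' := fun {a b} ha hb i => σ.trans (ha (b i)) (hb i)
  inv_mem' := fun {a} ha i => σ.symm (by simpa using ha (a⁻¹ i))

/-- The action of `S_n` on set partitions of `[n]`. -/
def permSetoid {n : ℕ} (w : Equiv.Perm (Fin n)) (σ : Setoid (Fin n)) : Setoid (Fin n) :=
  ⟨fun i j => σ.r (w⁻¹ i) (w⁻¹ j),
    ⟨fun _ => σ.refl _, fun h => σ.symm h, fun h h' => σ.trans h h'⟩⟩

/-- The double coset `S_μ z S_λ`, as a subset of `S_n`. -/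
def doubleCoset {n : ℕ} (mu lam : Setoid (Fin n)) (z : Equiv.Perm (Fin n)) :
    Set (Equiv.Perm (Fin n)) :=
  {g | ∃ a ∈ youngSubgroup mu, ∃ b ∈ youngSubgroup lam, g = a * z * b}

/-- Let `λ ≤ ν` and `μ ≤ ν` be set partitions of `[n]` (in refinement
order). Then `S_ν` decomposes as the disjoint union of the `(S_μ, S_λ)`-double cosets of its
elements, and for each `z ∈ S_ν` (in particular for each double coset representative),
`S_μ ∩ z S_λ z⁻¹ = S_{μ ∧ zλ}`. -/
theorem youngSubgroup_doubleCoset_decomposition {n : ℕ} (lam mu nu : Setoid (Fin n))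
    (hlam : lam ≤ nu) (hmu : mu ≤ nu) :
    ((youngSubgroup nu : Set (Equiv.Perm (Fin n))) =
        ⋃ z ∈ youngSubgroup nu, doubleCoset mu lam z) ∧
      (∀ z ∈ youngSubgroup nu, ∀ z' ∈ youngSubgroup nu,
        doubleCoset mu lam z = doubleCoset mu lam z' ∨
          Disjoint (doubleCoset mu lam z) (doubleCoset mu lam z')) ∧
      (∀ z ∈ youngSubgroup nu,
        youngSubgroup mu ⊓ Subgroup.map (MulAut.conj z).toMonoidHom (youngSubgroup lam) =
          youngSubgroup (mu ⊓ permSetoid z lam)) := by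
  have hmono : ∀ (σ τ : Setoid (Fin n)), σ ≤ τ → youngSubgroup σ ≤ youngSubgroup τ :=
    fun σ τ h w hw i => h (hw i)
  have key : ∀ z z' a a' b b', a ∈ youngSubgroup mu → a' ∈ youngSubgroup mu →
      b ∈ youngSubgroup lam → b' ∈ youngSubgroup lam →
      a * z * b = a' * z' * b' →
      doubleCoset mu lam z ⊆ doubleCoset mu lam z' := by
    rintro z z' a a' b b' ha ha' hb hb' he g ⟨c, hc, d, hd, rfl⟩
    refine ⟨c * a⁻¹ * a', mul_mem (mul_mem hc (inv_mem ha)) ha',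
      b' * b⁻¹ * d, mul_mem (mul_mem hb' (inv_mem hb)) hd, ?_⟩
    have hz : z = a⁻¹ * (a' * z' * b') * b⁻¹ := by rw [← he]; group
    rw [hz]; group
  refine ⟨?_, ?_, ?_⟩
  · ext g
    simp only [Set.mem_iUnion]
    constructor
    · intro hg
      exact ⟨g, hg, 1, one_mem _, 1, one_mem _, by group⟩
    · rintro ⟨z, hz, a, ha, b, hb, rfl⟩
      exact mul_mem (mul_mem (hmono _ _ hmu ha) hz) (hmono _ _ hlam hb)
  · intro z hz z' hz'
    by_cases h : Disjoint (doubleCoset mu lam z) (doubleCoset mu lam z')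
    · exact Or.inr h
    left
    rw [Set.not_disjoint_iff] at h
    obtain ⟨g, ⟨a, ha, b, hb, hg⟩, ⟨a', ha', b', hb', hg'⟩⟩ := h
    exact Set.Subset.antisymm
      (key z z' a a' b b' ha ha' hb hb' (hg ▸ hg'.symm ▸ rfl))
      (key z' z a' a b' b ha' ha hb' hb (hg' ▸ hg.symm ▸ rfl))
  · intro z hz
    ext g
    simp only [Subgroup.mem_inf, Subgroup.mem_map, MulEquiv.coe_toMonoidHom,
      MulAut.conj_apply]
    constructor
    · rintro ⟨hgm, h, hh, rfl⟩
      intro i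
      refine Setoid.inf_iff_and.mpr ⟨hgm i, ?_⟩
      show lam.r (z⁻¹ (z (h (z⁻¹ i)))) (z⁻¹ i)
      simpa using hh (z⁻¹ i)
    · intro hg
      refine ⟨fun i => (Setoid.inf_iff_and.mp (hg i)).1,
        z⁻¹ * g * z, fun i => ?_, by group⟩
      have h2 : lam.r (z⁻¹ (g (z i))) (z⁻¹ (z i)) :=
        (Setoid.inf_iff_and.mp (hg (z i))).2
      show lam.r (z⁻¹ (g (z i))) i
      simpa using h2
end

section
/- In the character ring R(S_n) ⊗_ℤ k over a field k of characteristic 0, the classes [Ind_{S_λ}^{S_n} 1] of the trivial modules induced from Young subgroups, as λ ranges over integer partitions of n (with one set-partition representative each), form a k-basis; in particular dim_k R(S_n) ⊗ k = p(n), the number of partitions of n. -/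
set_option synthInstance.maxHeartbeats 400000
set_option maxHeartbeats 1000000

/-- The permutation character of `S_n` acting on the right coset space `S_λ\S_n`, with
values in `k`: its value at `g` is the number of cosets fixed by right translation by `g`.
This is the character of `Ind_{S_λ}^{S_n} 1`. -/
noncomputable def permChar (k : Type) [Field k] {n : ℕ} (σ : Setoid (Fin n)) :
    Equiv.Perm (Fin n) → k := fun g =>
  (Nat.card {y : Quotient (QuotientGroup.rightRel (youngSubgroup σ)) //
      Quotient.map (· * g)
        (fun a b h => QuotientGroup.rightRel_apply.mpr
          (by simpa [mul_assoc] using QuotientGroup.rightRel_apply.mp h)) y = y} : k)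

/-- The space of `k`-valued class functions on `S_n`; over a field of characteristic zero
this is the image of `R(S_n) ⊗_ℤ k`, spanned by the (virtual) characters. -/
def classFunctions (k : Type) [Field k] (n : ℕ) : Submodule k (Equiv.Perm (Fin n) → k) where
  carrier := {f | ∀ g h : Equiv.Perm (Fin n), f (h * g * h⁻¹) = f g}
  add_mem' := by
    intro a b ha hb g h
    show a (h * g * h⁻¹) + b (h * g * h⁻¹) = a g + b g
    rw [ha g h, hb g h]
  zero_mem' := fun _ _ => rfl
  smul_mem' := by
    intro c f hf g h
    show c * f (h * g * h⁻¹) = c * f g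
    rw [hf g h]

namespace IndTrivAux

open Equiv Equiv.Perm
open Fin.NatCast

variable {n : ℕ}

/-- The setoid whose classes are the orbits (cycles) of a permutation. -/
def orbSetoid (g : Equiv.Perm (Fin n)) : Setoid (Fin n) :=
  ⟨g.SameCycle, Equiv.Perm.SameCycle.equivalence g⟩

lemma rel_zpow {σ : Setoid (Fin n)} {g : Equiv.Perm (Fin n)}
    (hg : g ∈ youngSubgroup σ) : ∀ (m : ℤ) (i : Fin n), σ.r ((g ^ m) i) i := by
  have hginv : ∀ i, σ.r (g⁻¹ i) i := (youngSubgroup σ).inv_mem hg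
  intro m
  induction m using Int.induction_on with
  | zero => intro i; simpa using σ.refl i
  | succ m ih =>
      intro i
      rw [zpow_add_one]
      exact σ.trans (ih (g i)) (hg i)
  | pred m ih =>
      intro i
      rw [zpow_sub_one]
      exact σ.trans (ih (g⁻¹ i)) (hginv i)

lemma young_rel {σ : Setoid (Fin n)} {g : Equiv.Perm (Fin n)}
    (hg : g ∈ youngSubgroup σ) {i j : Fin n} (h : (orbSetoid g).r i j) : σ.r i j := by
  obtain ⟨m, hm⟩ := h
  exact hm ▸ σ.symm (rel_zpow hg m i)

/-- Quotient map between setoid quotients induced by a refinement. -/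
def setoidHom {σ τ : Setoid (Fin n)} (h : ∀ i j, σ.r i j → τ.r i j) :
    Quotient σ → Quotient τ :=
  fun q => Quotient.liftOn q (Quotient.mk τ) (fun a b hab => Quotient.sound (h a b hab))

lemma setoidHom_surj {σ τ : Setoid (Fin n)} (h : ∀ i j, σ.r i j → τ.r i j) :
    Function.Surjective (setoidHom h) :=
  fun q => Quotient.inductionOn q (fun a => ⟨Quotient.mk σ a, rfl⟩)

lemma card_quot_le {σ τ : Setoid (Fin n)} (h : ∀ i j, σ.r i j → τ.r i j) :
    Nat.card (Quotient τ) ≤ Nat.card (Quotient σ) :=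
  Nat.card_le_card_of_surjective _ (setoidHom_surj h)

lemma setoid_eq_of_card_le {σ τ : Setoid (Fin n)} (h : ∀ i j, σ.r i j → τ.r i j)
    (hcard : Nat.card (Quotient σ) ≤ Nat.card (Quotient τ)) : σ = τ := by
  have hsurj := setoidHom_surj h
  have hinj : Function.Injective (setoidHom h) := by
    haveI := Fintype.ofFinite (Quotient σ)
    haveI := Fintype.ofFinite (Quotient τ)
    have h1 := Nat.card_le_card_of_surjective _ hsurj
    rw [Nat.card_eq_fintype_card, Nat.card_eq_fintype_card] at h1 hcard
    exact ((Fintype.bijective_iff_surjective_and_card _).2 ⟨hsurj, le_antisymm hcard h1⟩).1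
  apply Setoid.ext
  intro a b
  refine ⟨h a b, fun hab => ?_⟩
  have heq : setoidHom h (Quotient.mk σ a) = setoidHom h (Quotient.mk σ b) := by
    show Quotient.mk τ a = Quotient.mk τ b
    exact Quotient.sound hab
  exact Quotient.exact (hinj heq)

lemma permSetoid_one (σ : Setoid (Fin n)) : permSetoid 1 σ = σ := by
  apply Setoid.ext
  intro a b
  show σ.r ((1 : Equiv.Perm (Fin n))⁻¹ a) ((1 : Equiv.Perm (Fin n))⁻¹ b) ↔ σ.r a b
  simp

lemma card_quot_permSetoid (w : Equiv.Perm (Fin n)) (σ : Setoid (Fin n)) :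
    Nat.card (Quotient (permSetoid w σ)) = Nat.card (Quotient σ) :=
  Nat.card_congr (Quotient.congr (w⁻¹ : Equiv.Perm (Fin n)) (fun _ _ => Iff.rfl))

lemma orbSetoid_conj (x g : Equiv.Perm (Fin n)) :
    orbSetoid (x * g * x⁻¹) = permSetoid x (orbSetoid g) :=
  Setoid.ext fun _ _ => Equiv.Perm.sameCycle_conj

lemma finRotate_pow {k : ℕ} (m : ℕ) (a : Fin (k + 1)) :
    ((finRotate (k + 1)) ^ m) a = a + (m : Fin (k + 1)) := by
  induction m with
  | zero => simp
  | succ m ih =>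
      rw [pow_succ', Equiv.Perm.mul_apply, ih, finRotate_succ_apply, Nat.cast_succ, add_assoc]

lemma finRotate_trans {k : ℕ} (hk : k ≠ 0) (a b : Fin k) :
    ∃ m : ℕ, ((finRotate k) ^ m) a = b := by
  obtain ⟨k, rfl⟩ := Nat.exists_eq_succ_of_ne_zero hk
  refine ⟨(b - a).val, ?_⟩
  rw [finRotate_pow, Fin.cast_val_eq_self, add_comm, sub_add_cancel]

variable (σ : Setoid (Fin n))

/-- The fiber of the quotient map over `q`. -/
abbrev Fib (q : Quotient σ) : Type := {i : Fin n // Quotient.mk σ i = q}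

/-- A cyclic rotation of the block `q`. -/
noncomputable def blockPerm (q : Quotient σ) : Equiv.Perm (Fib σ q) :=
  (Finite.equivFin (Fib σ q)).symm.permCongr (finRotate _)

lemma blockPerm_trans {q : Quotient σ} (x y : Fib σ q) :
    ∃ m : ℕ, ((blockPerm σ q) ^ m) x = y := by
  have hk : Nat.card (Fib σ q) ≠ 0 := Nat.card_ne_zero.2 ⟨⟨x⟩, inferInstance⟩
  obtain ⟨m, hm⟩ := finRotate_trans hk (Finite.equivFin (Fib σ q) x) (Finite.equivFin (Fib σ q) y)
  refine ⟨m, ?_⟩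
  have hp : ∀ (m : ℕ) (z : Fib σ q), ((blockPerm σ q) ^ m) z =
      (Finite.equivFin (Fib σ q)).symm (((finRotate _) ^ m) (Finite.equivFin (Fib σ q) z)) := by
    intro m
    induction m with
    | zero => intro z; simp
    | succ m ih =>
        intro z
        rw [pow_succ', pow_succ', Equiv.Perm.mul_apply, Equiv.Perm.mul_apply, ih]
        show blockPerm σ q _ = _
        simp [blockPerm, Equiv.permCongr_apply]
  rw [hp, hm]
  simp

/-- A permutation whose cycles are exactly the blocks of `σ`. -/
noncomputable def gPerm : Equiv.Perm (Fin n) :=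
  (Equiv.sigmaFiberEquiv (Quotient.mk σ)).permCongr
    (Equiv.sigmaCongrRight (fun q => blockPerm σ q))

lemma gPerm_apply (i : Fin n) :
    gPerm σ i = (blockPerm σ (Quotient.mk σ i) ⟨i, rfl⟩).val := rfl

lemma gPerm_mk (i : Fin n) : Quotient.mk σ (gPerm σ i) = Quotient.mk σ i := by
  rw [gPerm_apply]
  exact (blockPerm σ (Quotient.mk σ i) ⟨i, rfl⟩).prop

lemma gPerm_mem : gPerm σ ∈ youngSubgroup σ :=
  fun i => Quotient.exact (gPerm_mk σ i)

lemma gPerm_block {q : Quotient σ} (z : Fib σ q) :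
    gPerm σ z.val = (blockPerm σ q z).val := by
  obtain ⟨i, rfl⟩ := z
  exact gPerm_apply σ i

lemma gPerm_pow_block {q : Quotient σ} (m : ℕ) (z : Fib σ q) :
    ((gPerm σ) ^ m) z.val = (((blockPerm σ q) ^ m) z).val := by
  induction m with
  | zero => simp
  | succ m ih =>
      rw [pow_succ', pow_succ', Equiv.Perm.mul_apply, Equiv.Perm.mul_apply, ih, gPerm_block]

lemma orbSetoid_gPerm : orbSetoid (gPerm σ) = σ := by
  apply Setoid.ext
  intro i j
  constructor
  · exact fun h => young_rel (gPerm_mem σ) h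
  · intro hij
    have hq : Quotient.mk σ i = Quotient.mk σ j := Quotient.sound hij
    obtain ⟨m, hm⟩ := blockPerm_trans σ (⟨i, hq⟩ : Fib σ (Quotient.mk σ j)) ⟨j, rfl⟩
    exact ⟨(m : ℤ), by
      rw [zpow_natCast]
      exact (gPerm_pow_block σ m ⟨i, hq⟩).trans (congrArg Subtype.val hm)⟩

end IndTrivAux

namespace IndTrivAux

variable {n : ℕ}

/-- Right translation on the right coset space. -/
def tr (σ : Setoid (Fin n)) (u : Equiv.Perm (Fin n)) :
    Quotient (QuotientGroup.rightRel (youngSubgroup σ)) →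
      Quotient (QuotientGroup.rightRel (youngSubgroup σ)) :=
  Quotient.map (· * u)
    (fun a b h => QuotientGroup.rightRel_apply.mpr
      (by simpa [mul_assoc] using QuotientGroup.rightRel_apply.mp h))

lemma permChar_eq (k : Type) [Field k] (σ : Setoid (Fin n)) (g : Equiv.Perm (Fin n)) :
    permChar k σ g = (Nat.card {y // tr σ g y = y} : k) := rfl

lemma tr_tr (σ : Setoid (Fin n)) (u v : Equiv.Perm (Fin n))
    (y : Quotient (QuotientGroup.rightRel (youngSubgroup σ))) :
    tr σ u (tr σ v y) = tr σ (v * u) y := by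
  induction y using Quotient.inductionOn with
  | h x =>
      show Quotient.mk _ (x * v * u) = Quotient.mk _ (x * (v * u))
      rw [mul_assoc]

lemma tr_one (σ : Setoid (Fin n))
    (y : Quotient (QuotientGroup.rightRel (youngSubgroup σ))) : tr σ 1 y = y := by
  induction y using Quotient.inductionOn with
  | h x =>
      show Quotient.mk _ (x * 1) = Quotient.mk _ x
      rw [mul_one]

lemma permChar_conj (k : Type) [Field k] (σ : Setoid (Fin n)) (g h : Equiv.Perm (Fin n)) :
    permChar k σ (h * g * h⁻¹) = permChar k σ g := by
  rw [permChar_eq, permChar_eq]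
  congr 1
  apply Nat.card_congr
  refine
    { toFun := fun y => ⟨tr σ h y.1, ?_⟩
      invFun := fun z => ⟨tr σ h⁻¹ z.1, ?_⟩
      left_inv := ?_
      right_inv := ?_ }
  · rw [tr_tr]
    refine (congrFun (congrArg (tr σ) (show h * g = (h * g * h⁻¹) * h by group)) y.1).trans ?_
    rw [← tr_tr, y.2]
  · rw [tr_tr, show h⁻¹ * (h * g * h⁻¹) = g * h⁻¹ by group, ← tr_tr, z.2]
  · intro y
    apply Subtype.ext
    show tr σ h⁻¹ (tr σ h y.1) = y.1
    rw [tr_tr, mul_inv_cancel, tr_one]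
  · intro z
    apply Subtype.ext
    show tr σ h (tr σ h⁻¹ z.1) = z.1
    rw [tr_tr, inv_mul_cancel, tr_one]

lemma permChar_mem (k : Type) [Field k] (σ : Setoid (Fin n)) :
    permChar k σ ∈ classFunctions k n :=
  fun g h => permChar_conj k σ g h

lemma permChar_ne_zero_iff (k : Type) [Field k] [CharZero k] (σ : Setoid (Fin n))
    (g : Equiv.Perm (Fin n)) :
    permChar k σ g ≠ 0 ↔ ∃ x : Equiv.Perm (Fin n), x * g * x⁻¹ ∈ youngSubgroup σ := by
  have hiff : Nonempty {y // tr σ g y = y} ↔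
      ∃ x : Equiv.Perm (Fin n), x * g * x⁻¹ ∈ youngSubgroup σ := by
    constructor
    · rintro ⟨⟨y, hy⟩⟩
      induction y using Quotient.inductionOn with
      | h x =>
          refine ⟨x, ?_⟩
          have h1 : QuotientGroup.rightRel (youngSubgroup σ) (x * g) x :=
            Quotient.exact hy
          have h2 := (youngSubgroup σ).inv_mem (QuotientGroup.rightRel_apply.mp h1)
          simpa [mul_inv_rev, mul_assoc] using h2
    · rintro ⟨x, hx⟩
      refine ⟨⟨Quotient.mk _ x, ?_⟩⟩
      show Quotient.mk _ (x * g) = Quotient.mk _ x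
      apply Quotient.sound
      refine QuotientGroup.rightRel_apply.mpr ?_
      simpa [mul_inv_rev, mul_assoc] using (youngSubgroup σ).inv_mem hx
  rw [permChar_eq, Ne, Nat.cast_eq_zero, ← hiff]
  constructor
  · intro hcard
    exact (Nat.card_ne_zero.mp hcard).1
  · intro hne
    exact Nat.card_ne_zero.mpr ⟨hne, inferInstance⟩

end IndTrivAux

open IndTrivAux

/-- Over a field `k` of characteristic `0`, the classes
`[Ind_{S_λ}^{S_n} 1]` of the trivial modules induced from Young subgroups — one set
partition `c(P)` chosen for each `S_n`-orbit, i.e. for each integer partition `P` of `n` —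
form a `k`-basis of `R(S_n) ⊗_ℤ k`, realized here as the space of `k`-valued class
functions via their characters; in particular its dimension is `p(n)`, the number of
partitions of `n`. -/
theorem inducedTrivial_basis_charZero (k : Type) [Field k] [CharZero k] (n : ℕ)
    (c : Nat.Partition n → Setoid (Fin n))
    (hc : ∀ σ : Setoid (Fin n), ∃! P : Nat.Partition n,
      ∃ w : Equiv.Perm (Fin n), permSetoid w σ = c P) :
    LinearIndependent k (fun P : Nat.Partition n => permChar k (c P)) ∧
      Submodule.span k (Set.range (fun P : Nat.Partition n => permChar k (c P))) =
        classFunctions k n ∧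
      Module.finrank k (classFunctions k n) = Nat.card (Nat.Partition n) := by
  classical
  -- Step 1: linear independence
  have hind : LinearIndependent k (fun P : Nat.Partition n => permChar k (c P)) := by
    rw [Fintype.linearIndependent_iff]
    intro a ha
    by_contra hne
    push_neg at hne
    obtain ⟨P1, hP1⟩ := hne
    set S : Finset (Nat.Partition n) := Finset.univ.filter (fun P => a P ≠ 0) with hS
    have hSne : S.Nonempty := ⟨P1, by simp [hS, hP1]⟩
    obtain ⟨P0, hP0S, hmin⟩ :=
      S.exists_min_image (fun P => Nat.card (Quotient (c P))) hSne
    have haP0 : a P0 ≠ 0 := by simpa [hS] using hP0S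
    set g := gPerm (c P0) with hg
    have hsum : ∑ P : Nat.Partition n, a P * permChar k (c P) g = 0 := by
      have h1 := congrFun ha g
      simpa [Finset.sum_apply] using h1
    have hvanish : ∀ Q ∈ Finset.univ, Q ≠ P0 → a Q * permChar k (c Q) g = 0 := by
      intro Q _ hQ
      rcases eq_or_ne (a Q) 0 with haQ | haQ
      · rw [haQ, zero_mul]
      rcases eq_or_ne (permChar k (c Q) g) 0 with h0 | h0
      · rw [h0, mul_zero]
      exfalso
      obtain ⟨x, hx⟩ := (permChar_ne_zero_iff k (c Q) g).mp h0
      have h1 : orbSetoid (x * g * x⁻¹) = permSetoid x (c P0) := by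
        rw [orbSetoid_conj, hg, orbSetoid_gPerm]
      have hle : ∀ i j, (orbSetoid (x * g * x⁻¹)).r i j → (c Q).r i j :=
        fun i j hij => young_rel hx hij
      have hcard2 : Nat.card (Quotient (orbSetoid (x * g * x⁻¹))) =
          Nat.card (Quotient (c P0)) := by
        rw [h1, card_quot_permSetoid]
      have hQS : Q ∈ S := by simp [hS, haQ]
      have hmin' := hmin Q hQS
      have heq : orbSetoid (x * g * x⁻¹) = c Q :=
        setoid_eq_of_card_le hle (by omega)
      have hperm : permSetoid x (c P0) = c Q := h1 ▸ heq
      obtain ⟨P', hP', huniq⟩ := hc (c P0)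
      exact hQ ((huniq Q ⟨x, hperm⟩).trans (huniq P0 ⟨1, permSetoid_one (c P0)⟩).symm)
    have hsingle := Finset.sum_eq_single_of_mem P0 (Finset.mem_univ P0) hvanish
    rw [hsingle] at hsum
    have hne0 : permChar k (c P0) g ≠ 0 :=
      (permChar_ne_zero_iff k (c P0) g).mpr ⟨1, by simpa using gPerm_mem (c P0)⟩
    exact haP0 ((mul_eq_zero.mp hsum).resolve_right hne0)
  -- Step 2: the subspace version of the family
  have hmem : ∀ P : Nat.Partition n, permChar k (c P) ∈ classFunctions k n :=
    fun P => permChar_mem k (c P)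
  set v : Nat.Partition n → classFunctions k n := fun P => ⟨permChar k (c P), hmem P⟩ with hv
  have hindv : LinearIndependent k v := by
    apply LinearIndependent.of_comp (classFunctions k n).subtype
    exact hind
  have hle1 : Fintype.card (Nat.Partition n) ≤ Module.finrank k (classFunctions k n) :=
    hindv.fintype_card_le_finrank
  -- Step 3: class functions have dimension the number of conjugacy classes
  haveI : Fintype (ConjClasses (Equiv.Perm (Fin n))) := Fintype.ofFinite _
  have hΦrange : LinearMap.range (LinearMap.funLeft k k
      (ConjClasses.mk : Equiv.Perm (Fin n) → ConjClasses (Equiv.Perm (Fin n)))) =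
      classFunctions k n := by
    ext f
    constructor
    · rintro ⟨φ, rfl⟩ g h
      show φ (ConjClasses.mk (h * g * h⁻¹)) = φ (ConjClasses.mk g)
      congr 1
      rw [ConjClasses.mk_eq_mk_iff_isConj]
      exact (isConj_iff.mpr ⟨h, rfl⟩).symm
    · intro hf
      refine ⟨Quotient.lift f (fun a b hab => ?_), ?_⟩
      · obtain ⟨u, hu⟩ := isConj_iff.mp hab
        rw [← hu]
        exact (hf a u).symm
      · ext g
        rfl
  have hΦinj : Function.Injective (LinearMap.funLeft k k
      (ConjClasses.mk : Equiv.Perm (Fin n) → ConjClasses (Equiv.Perm (Fin n)))) :=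
    LinearMap.funLeft_injective_of_surjective k k _ ConjClasses.mk_surjective
  have hfr : Module.finrank k (classFunctions k n) =
      Fintype.card (ConjClasses (Equiv.Perm (Fin n))) := by
    rw [← hΦrange, LinearMap.finrank_range_of_inj hΦinj, Module.finrank_fintype_fun_eq_card]
  -- Step 4: injection of conjugacy classes into partitions
  have hle2 : Fintype.card (ConjClasses (Equiv.Perm (Fin n))) ≤
      Fintype.card (Nat.Partition n) := by
    set pe : Nat.Partition (Fintype.card (Fin n)) ≃ Nat.Partition n :=
      Equiv.cast (congrArg Nat.Partition (Fintype.card_fin n)) with hpe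
    have hwd : ∀ a b : Equiv.Perm (Fin n), IsConj a b →
        pe a.partition = pe b.partition := fun a b hab => by
      rw [Equiv.Perm.partition_eq_of_isConj.mp hab]
    refine Fintype.card_le_of_injective
      (fun cls => Quotient.liftOn cls (fun g => pe g.partition) hwd) ?_
    intro c1 c2
    induction c1 using Quotient.inductionOn with
    | h a =>
      induction c2 using Quotient.inductionOn with
      | h b =>
        intro hab
        have : pe a.partition = pe b.partition := hab
        apply Quotient.sound
        exact Equiv.Perm.partition_eq_of_isConj.mpr (pe.injective this)
  have hcards : Module.finrank k (classFunctions k n) = Fintype.card (Nat.Partition n) :=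
    le_antisymm (hfr ▸ hle2) hle1
  refine ⟨hind, ?_, by rw [hcards, Nat.card_eq_fintype_card]⟩
  -- Step 5: the span
  have hspan : Submodule.span k (Set.range v) = ⊤ :=
    hindv.span_eq_top_of_card_eq_finrank' hcards.symm
  have hrange : Set.range (fun P : Nat.Partition n => permChar k (c P)) =
      (classFunctions k n).subtype '' Set.range v := by
    rw [← Set.range_comp]
    rfl
  rw [hrange, Submodule.span_image, hspan, Submodule.map_top, Submodule.range_subtype]
end
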